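/- Let s be a nonzero integer and n ≥ 2. Then the Diophantine equation 1/x_1 + ⋯ + 1/x_n = s/(x_1·x_2⋯x_n) has infinitely many solutions in nonzero integers (x_1, …, x_n) satisfying min_i |x_i| ≥ 2. -/

import Mathlib

open Finset

/-- Auxiliary sequence: `auxP t 0 = t`, `auxP t (k+1) = auxP t k * (1 - auxP t k)`. -/
def auxP13 (t : ℤ) : ℕ → ℤ
  | 0 => t
  | k+1 => auxP13 t k * (1 - auxP13 t k)

def auxB13 (t : ℤ) : ℕ → ℤ
  | 0 => t
  | k+1 => 1 - auxP13 t k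

lemma auxP13_succ_le (t : ℤ) (ht : 3 ≤ t) : ∀ k, auxP13 t (k+1) ≤ -2 * t := by
  intro k
  induction k with
  | zero =>
      show t * (1 - t) ≤ -2 * t
      nlinarith
  | succ k ih =>
      show auxP13 t (k+1) * (1 - auxP13 t (k+1)) ≤ -2 * t
      nlinarith [sq_nonneg (auxP13 t (k+1))]

lemma auxP13_facts (t : ℤ) (ht : 3 ≤ t) (k : ℕ) : auxP13 t k ≠ 0 ∧ auxP13 t k ≠ 1 := by
  cases k with
  | zero => simp only [auxP13]; omega
  | succ k => have := auxP13_succ_le t ht k; omega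

lemma auxB13_prod (t : ℤ) (k : ℕ) :
    ∏ i ∈ range (k+1), auxB13 t i = auxP13 t k := by
  induction k with
  | zero => simp [auxB13, auxP13]
  | succ k ih =>
      rw [prod_range_succ, ih]
      show auxP13 t k * (1 - auxP13 t k) = auxP13 t (k+1)
      rfl

lemma auxB13_sum_inv (t : ℤ) (ht : 3 ≤ t) (k : ℕ) :
    ∑ i ∈ range (k+1), ((auxB13 t i : ℚ))⁻¹ = ((auxP13 t k : ℚ))⁻¹ := by
  induction k with
  | zero => simp [auxB13, auxP13]
  | succ k ih =>
      rw [sum_range_succ, ih]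
      obtain ⟨h0, h1⟩ := auxP13_facts t ht k
      have hq0 : (auxP13 t k : ℚ) ≠ 0 := Int.cast_ne_zero.mpr h0
      have hq1 : (1 : ℚ) - (auxP13 t k : ℚ) ≠ 0 := by
        intro h
        apply h1
        have : (auxP13 t k : ℚ) = ((1 : ℤ) : ℚ) := by push_cast; linarith
        exact_mod_cast this
      show ((auxP13 t k : ℚ))⁻¹ + ((auxB13 t (k+1) : ℤ) : ℚ)⁻¹
          = ((auxP13 t (k+1) : ℤ) : ℚ)⁻¹
      have hb : (auxB13 t (k+1) : ℤ) = 1 - auxP13 t k := rfl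
      have hp : (auxP13 t (k+1) : ℤ) = auxP13 t k * (1 - auxP13 t k) := rfl
      rw [hb, hp]
      push_cast
      field_simp
      ring

lemma auxB13_abs (t : ℤ) (ht : 3 ≤ t) (k : ℕ) : 2 ≤ |auxB13 t k| := by
  rw [Int.abs_eq_natAbs]
  match k with
  | 0 => show 2 ≤ ((t.natAbs : ℤ)); omega
  | 1 =>
      have : auxB13 t 1 = 1 - t := rfl
      rw [this]; omega
  | (k+2) =>
      have h := auxP13_succ_le t ht k
      have : auxB13 t (k+2) = 1 - auxP13 t (k+1) := rfl
      rw [this]; omega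

theorem infinitely_many_solutions_m_zero_r_one
    (s : ℤ) (hs : s ≠ 0) (n : ℕ) (hn : 2 ≤ n) :
    {x : Fin n → ℤ |
        (∀ i, 2 ≤ |x i|) ∧
        (∑ i, ((x i : ℚ))⁻¹) = (s : ℚ) / (∏ i, (x i : ℚ))}.Infinite := by
  obtain ⟨m, rfl⟩ : ∃ m, n = m + 2 := ⟨n - 2, by omega⟩
  set F : ℤ → (Fin (m+2) → ℤ) :=
    fun t i => if (i : ℕ) < m + 1 then auxB13 t i else s - auxP13 t m with hF
  have key : ∀ t : ℤ, |s| + 3 ≤ t → F t ∈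
      {x : Fin (m+2) → ℤ |
        (∀ i, 2 ≤ |x i|) ∧
        (∑ i, ((x i : ℚ))⁻¹) = (s : ℚ) / (∏ i, (x i : ℚ))} := by
    intro t ht
    have ht3 : 3 ≤ t := by have := abs_nonneg s; omega
    have hts : s.natAbs + 3 ≤ t := by rw [Int.abs_eq_natAbs] at ht; omega
    obtain ⟨hP0, hP1⟩ := auxP13_facts t ht3 m
    have hlast : 2 ≤ |s - auxP13 t m| := by
      rw [Int.abs_eq_natAbs]
      cases m with
      | zero => show 2 ≤ ((s - auxP13 t 0).natAbs : ℤ); simp only [auxP13]; omega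
      | succ k => have := auxP13_succ_le t ht3 k; omega
    have hlast0 : s - auxP13 t m ≠ 0 := by
      intro h; rw [h] at hlast; simp at hlast
    constructor
    · intro i
      by_cases hi : (i : ℕ) < m + 1
      · simp only [hF, if_pos hi]
        exact auxB13_abs t ht3 i
      · simp only [hF, if_neg hi]
        exact hlast
    · -- equation
      have hsum : (∑ i : Fin (m+2), ((F t i : ℚ))⁻¹)
          = ∑ j ∈ range (m+2),
              (((if j < m + 1 then auxB13 t j else s - auxP13 t m : ℤ) : ℚ))⁻¹ := by
        rw [← Fin.sum_univ_eq_sum_range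
          (fun j => (((if j < m + 1 then auxB13 t j else s - auxP13 t m : ℤ) : ℚ))⁻¹) (m+2)]
      have hprod : (∏ i : Fin (m+2), ((F t i : ℚ)))
          = ∏ j ∈ range (m+2),
              (((if j < m + 1 then auxB13 t j else s - auxP13 t m : ℤ) : ℚ)) := by
        rw [← Fin.prod_univ_eq_prod_range
          (fun j => (((if j < m + 1 then auxB13 t j else s - auxP13 t m : ℤ) : ℚ))) (m+2)]
      rw [show (∑ i : Fin (m+2), ((F t i : ℚ))⁻¹) = _ from hsum,
          show (∏ i : Fin (m+2), ((F t i : ℚ))) = _ from hprod]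
      rw [sum_range_succ, prod_range_succ]
      have hcongr1 : ∑ j ∈ range (m+1),
            (((if j < m + 1 then auxB13 t j else s - auxP13 t m : ℤ) : ℚ))⁻¹
          = ∑ j ∈ range (m+1), ((auxB13 t j : ℚ))⁻¹ := by
        apply sum_congr rfl
        intro j hj
        rw [if_pos (mem_range.mp hj)]
      have hcongr2 : ∏ j ∈ range (m+1),
            (((if j < m + 1 then auxB13 t j else s - auxP13 t m : ℤ) : ℚ))
          = ∏ j ∈ range (m+1), ((auxB13 t j : ℚ)) := by
        apply prod_congr rfl
        intro j hj
        rw [if_pos (mem_range.mp hj)]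
      rw [hcongr1, hcongr2, if_neg (lt_irrefl (m+1)), auxB13_sum_inv t ht3 m]
      have hprodint : ∏ j ∈ range (m+1), ((auxB13 t j : ℚ)) = ((auxP13 t m : ℤ) : ℚ) := by
        rw [← auxB13_prod t m]; push_cast; rfl
      rw [hprodint]
      have hq0 : ((auxP13 t m : ℤ) : ℚ) ≠ 0 := Int.cast_ne_zero.mpr hP0
      have hq1 : ((s - auxP13 t m : ℤ) : ℚ) ≠ 0 := Int.cast_ne_zero.mpr hlast0
      push_cast at hq1 ⊢
      field_simp
      ring
  have hinj : Set.InjOn F (Set.Ici (|s| + 3)) := by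
    intro a _ b _ h
    have h0 := congrFun h ⟨0, by omega⟩
    simpa [hF, auxB13] using h0
  have hinf : ((Set.Ici (|s| + 3)).image F).Infinite :=
    Set.Infinite.image hinj (Set.Ici_infinite _)
  apply hinf.mono
  rintro x ⟨t, ht, rfl⟩
  exact key t ht
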